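/- arXiv:math/0401355 — 2 statements merged into one kernel-verified Lean document; each statement's English description precedes it below -/
import Mathlib

section
/- Let n be a positive integer, let α_j ∈ [0,1) and a_j ≥ 0 for 1 ≤ j ≤ n, and let y ≥ 0 satisfy y ≤ Σ_{j=1}^n a_j y^{α_j}. Then y ≤ C Σ_{j=1}^n a_j^{1/(1-α_j)}, where C = max_{1 ≤ j ≤ n} n^{1/(1-α_j)}. -/
/-- Lemma 2.2: if `0 ≤ αⱼ < 1`, `aⱼ ≥ 0` and `y ≥ 0` satisfies
`y ≤ ∑ⱼ aⱼ y^{αⱼ}`, then `y ≤ C ∑ⱼ aⱼ^{1/(1-αⱼ)}` with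
`C = maxⱼ n^{1/(1-αⱼ)}`. -/
theorem stmt_0 (n : ℕ) (hn : 0 < n) (α a : Fin n → ℝ)
    (hα0 : ∀ j, 0 ≤ α j) (hα1 : ∀ j, α j < 1) (ha : ∀ j, 0 ≤ a j)
    (y : ℝ) (hy : 0 ≤ y)
    (h : y ≤ ∑ j, a j * y ^ α j) :
    y ≤ (Finset.univ.sup' ⟨⟨0, hn⟩, Finset.mem_univ _⟩
          (fun j => (n : ℝ) ^ (1 / (1 - α j)))) *
        ∑ j, a j ^ (1 / (1 - α j)) := by
  set ne : (Finset.univ : Finset (Fin n)).Nonempty := ⟨⟨0, hn⟩, Finset.mem_univ _⟩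
  have hC0 : (0:ℝ) ≤ Finset.univ.sup' ne (fun j => (n : ℝ) ^ (1 / (1 - α j))) := by
    refine le_trans ?_ (Finset.le_sup' _ (Finset.mem_univ ⟨0, hn⟩))
    positivity
  have hsum0 : (0:ℝ) ≤ ∑ j, a j ^ (1 / (1 - α j)) := by
    refine Finset.sum_nonneg fun j _ => Real.rpow_nonneg (ha j) _
  rcases eq_or_lt_of_le hy with hy0 | hy0
  · rw [← hy0]; exact mul_nonneg hC0 hsum0
  -- pigeonhole
  have hpig : ∃ j ∈ (Finset.univ : Finset (Fin n)), y / n ≤ a j * y ^ α j := by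
    apply Finset.exists_le_of_sum_le ne
    have : ∑ _j : Fin n, y / n = y := by
      rw [Finset.sum_const, Finset.card_univ, Fintype.card_fin, nsmul_eq_mul]
      field_simp
    rw [this]; exact h
  obtain ⟨j, -, hj⟩ := hpig
  have h1α : 0 < 1 - α j := by linarith [hα1 j]
  have hyα : 0 < y ^ α j := Real.rpow_pos_of_pos hy0 _
  have hkey : y ^ (1 - α j) ≤ n * a j := by
    have hy' : y ≤ n * (a j * y ^ α j) :=
      (div_le_iff₀' (show (0:ℝ) < n by exact_mod_cast hn)).mp hj
    have hsplit : y ^ (1 - α j) * y ^ α j = y := by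
      rw [← Real.rpow_add hy0]
      simp
    rw [← mul_le_mul_iff_of_pos_right hyα, hsplit, mul_assoc]
    exact hy'
  have hexp : 0 < 1 / (1 - α j) := by positivity
  have : y ≤ ((n : ℝ) * a j) ^ (1 / (1 - α j)) := by
    have := Real.rpow_le_rpow (Real.rpow_nonneg hy _) hkey (le_of_lt hexp)
    rwa [← Real.rpow_mul hy, mul_one_div, div_self h1α.ne', Real.rpow_one] at this
  have hsplit2 : ((n : ℝ) * a j) ^ (1 / (1 - α j))
      = (n : ℝ) ^ (1 / (1 - α j)) * a j ^ (1 / (1 - α j)) :=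
    Real.mul_rpow (by positivity) (ha j)
  refine this.trans ?_
  rw [hsplit2]
  have h1 : (n : ℝ) ^ (1 / (1 - α j)) ≤ Finset.univ.sup' ne (fun j => (n : ℝ) ^ (1 / (1 - α j))) :=
    Finset.le_sup' (fun k => (n:ℝ) ^ (1 / (1 - α k))) (Finset.mem_univ j)
  have h2 : a j ^ (1 / (1 - α j)) ≤ ∑ k, a k ^ (1 / (1 - α k)) :=
    Finset.single_le_sum (f := fun k => a k ^ (1 / (1 - α k))) (fun k _ => Real.rpow_nonneg (ha k) _) (Finset.mem_univ j)
  exact mul_le_mul h1 h2 (Real.rpow_nonneg (ha j) _) hC0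
end

section
/- Let 0 ≤ α_j < α_1 < 1 for 2 ≤ j ≤ n, let I be an interval, let a_j : I → [0,∞) be continuous for 0 ≤ j ≤ n, and let y : I → [0,∞) be absolutely continuous with |y'(t)| ≤ a_0(t) y(t) + Σ_{j=1}^n a_j(t) y(t)^{α_j} for all t ∈ I. Let t_0 ∈ I, y(t_0) = y_0, and set A_0(t) = |∫_{t_0}^t a_0(t') dt'| and A_j(t) = (1-α_j)|∫_{t_0}^t a_j(t') dt'| for 1 ≤ j ≤ n. Then for all t ∈ I, y(t) ≤ exp(A_0(t)) · { y_0^{1-α_1} + Σ_{j=1}^n A_j(t)^{(1-α_1)/(1-α_j)} }^{1/(1-α_1)}. -/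
open intervalIntegral Set Filter Topology MeasureTheory

private lemma ftc_right_aux {f : ℝ → ℝ} {t₀ T x : ℝ} {I : Set ℝ}
    (hf : ContinuousOn f I) (hsub : Icc t₀ T ⊆ I) (hx : x ∈ Ico t₀ T) :
    HasDerivWithinAt (fun u => ∫ s in t₀..u, f s) (f x) (Ici x) x := by
  have hxT : x < T := hx.2
  have h1 : Icc x T ⊆ I := fun z hz => hsub ⟨hx.1.trans hz.1, hz.2⟩
  have hint : IntervalIntegrable f MeasureTheory.volume t₀ x := by
    apply ContinuousOn.intervalIntegrable
    apply hf.mono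
    rw [uIcc_of_le hx.1]
    exact fun z hz => hsub ⟨hz.1, hz.2.trans hxT.le⟩
  have hmem : Icc x T ∈ 𝓝[>] x := Icc_mem_nhdsGT_of_mem ⟨le_rfl, hxT⟩
  have hmeas : StronglyMeasurableAtFilter f (𝓝[>] x) :=
    ⟨Icc x T, hmem, (hf.mono h1).aestronglyMeasurable measurableSet_Icc⟩
  have hcont : ContinuousWithinAt f (Ioi x) x :=
    ((hf.mono h1) x ⟨le_rfl, hxT.le⟩).mono_of_mem_nhdsWithin hmem
  exact intervalIntegral.integral_hasDerivWithinAt_right hint hmeas hcont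

private lemma gronwall_key (n : ℕ) (hn : 0 < n) (α : Fin n → ℝ)
    (hα0 : ∀ j, 0 ≤ α j) (hα1 : α ⟨0, hn⟩ < 1)
    (hαle : ∀ j, α j ≤ α ⟨0, hn⟩)
    (I : Set ℝ) (hI : I.OrdConnected)
    (a₀ : ℝ → ℝ) (a : Fin n → ℝ → ℝ)
    (ha₀c : ContinuousOn a₀ I) (ha₀nn : ∀ t ∈ I, 0 ≤ a₀ t)
    (hac : ∀ j, ContinuousOn (a j) I) (hann : ∀ j, ∀ t ∈ I, 0 ≤ a j t)
    (y y' : ℝ → ℝ)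
    (hy : ∀ t ∈ I, HasDerivAt y (y' t) t)
    (hynn : ∀ t ∈ I, 0 ≤ y t)
    (hbound : ∀ t ∈ I, |y' t| ≤ a₀ t * y t + ∑ j, a j t * y t ^ α j)
    (t₀ : ℝ) (ht₀ : t₀ ∈ I) (y₀ : ℝ) (hy₀ : y t₀ = y₀)
    (T : ℝ) (hT : T ∈ I) (hle : t₀ ≤ T) :
    y T ≤ Real.exp (∫ s in t₀..T, a₀ s) *
        (y₀ ^ (1 - α ⟨0, hn⟩) +
          ∑ j, ((1 - α j) * ∫ s in t₀..T, a j s) ^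
            ((1 - α ⟨0, hn⟩) / (1 - α j))) ^ (1 / (1 - α ⟨0, hn⟩)) := by
  set i0 : Fin n := ⟨0, hn⟩ with hi0
  have he1 : (0:ℝ) < 1 - α i0 := by linarith
  have h1α : ∀ j, (0:ℝ) < 1 - α j := fun j => by have := hαle j; linarith
  set e1 : ℝ := 1 - α i0 with he1def
  set p : ℝ := 1 / e1 with hpdef
  have hp : 0 < p := by positivity
  set q : Fin n → ℝ := fun j => e1 / (1 - α j) with hqdef
  have hq : ∀ j, 0 < q j := fun j => div_pos he1 (h1α j)
  have hsub : Icc t₀ T ⊆ I := hI.out ht₀ hT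
  have hy0nn : 0 ≤ y₀ := hy₀ ▸ hynn t₀ ht₀
  set A0 : ℝ → ℝ := fun t => ∫ s in t₀..t, a₀ s with hA0def
  set Aj : Fin n → ℝ → ℝ := fun j t => (1 - α j) * ∫ s in t₀..t, a j s with hAjdef
  have hA0nn : ∀ x ∈ Icc t₀ T, 0 ≤ A0 x := by
    intro x hx
    exact intervalIntegral.integral_nonneg hx.1
      (fun u hu => ha₀nn u (hsub ⟨hu.1, hu.2.trans hx.2⟩))
  have hAjnn : ∀ j, ∀ x ∈ Icc t₀ T, 0 ≤ Aj j x := by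
    intro j x hx
    exact mul_nonneg (h1α j).le (intervalIntegral.integral_nonneg hx.1
      (fun u hu => hann j u (hsub ⟨hu.1, hu.2.trans hx.2⟩)))
  -- the goal in terms of A0, Aj
  show y T ≤ Real.exp (A0 T) * (y₀ ^ e1 + ∑ j, (Aj j T) ^ (q j)) ^ p
  -- Step 1: the perturbed bound
  have hmain : ∀ ε : ℝ, 0 < ε →
      y T ≤ Real.exp (A0 T) *
        ((y₀ + ε) ^ e1 + ε * (T - t₀) + ∑ j, (Aj j T + ε) ^ (q j)) ^ p := by
    intro ε hε
    have hy₀ε : (0:ℝ) < y₀ + ε := by linarith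
    set Bf : ℝ → ℝ := fun t => (y₀ + ε) ^ e1 + ε * (t - t₀) + ∑ j, (Aj j t + ε) ^ (q j)
      with hBfdef
    have hBpos : ∀ x ∈ Icc t₀ T, 0 < Bf x := by
      intro x hx
      have h1 : 0 < (y₀ + ε) ^ e1 := Real.rpow_pos_of_pos hy₀ε _
      have h2 : 0 ≤ ε * (x - t₀) := mul_nonneg hε.le (by linarith [hx.1])
      have h3 : 0 ≤ ∑ j, (Aj j x + ε) ^ (q j) :=
        Finset.sum_nonneg fun j _ => Real.rpow_nonneg (by linarith [hAjnn j x hx]) _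
      simp only [hBfdef]
      linarith
    -- continuity statements
    have hA0c : ContinuousOn A0 (Icc t₀ T) := by
      have : IntegrableOn a₀ (uIcc t₀ T) := by
        rw [uIcc_of_le hle]; exact (ha₀c.mono hsub).integrableOn_Icc
      simpa [uIcc_of_le hle] using intervalIntegral.continuousOn_primitive_interval this
    have hAjc : ∀ j, ContinuousOn (Aj j) (Icc t₀ T) := by
      intro j
      apply continuousOn_const.mul
      have : IntegrableOn (a j) (uIcc t₀ T) := by
        rw [uIcc_of_le hle]; exact ((hac j).mono hsub).integrableOn_Icc
      simpa [uIcc_of_le hle] using intervalIntegral.continuousOn_primitive_interval this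
    have hBc : ContinuousOn Bf (Icc t₀ T) := by
      apply ContinuousOn.add
      apply ContinuousOn.add continuousOn_const
      · exact (continuousOn_const.mul ((continuousOn_id).sub continuousOn_const))
      · exact continuousOn_finset_sum _ fun j _ =>
          ((hAjc j).add continuousOn_const).rpow_const fun x hx => Or.inr (hq j).le
    have hZc : ContinuousOn (fun t => Real.exp (A0 t) * Bf t ^ p) (Icc t₀ T) :=
      (Real.continuous_exp.comp_continuousOn hA0c).mul
        (hBc.rpow_const fun x hx => Or.inr hp.le)
    -- derivative of Bf
    have hBd : ∀ x ∈ Ico t₀ T, HasDerivWithinAt Bf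
        (ε + ∑ j, ((1 - α j) * a j x) * q j * (Aj j x + ε) ^ (q j - 1)) (Ici x) x := by
      intro x hx
      have hxIcc : x ∈ Icc t₀ T := Ico_subset_Icc_self hx
      have h0 : HasDerivWithinAt (fun _ : ℝ => (y₀ + ε) ^ e1) 0 (Ici x) x :=
        hasDerivWithinAt_const _ _ _
      have h1 : HasDerivWithinAt (fun t : ℝ => ε * (t - t₀)) ε (Ici x) x := by
        simpa using ((hasDerivWithinAt_id x (Ici x)).sub_const t₀).const_mul ε
      have h2 : ∀ j : Fin n, HasDerivWithinAt (fun t => (Aj j t + ε) ^ (q j))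
          (((1 - α j) * a j x) * q j * (Aj j x + ε) ^ (q j - 1)) (Ici x) x := by
        intro j
        have hin : HasDerivWithinAt (fun t => Aj j t + ε) ((1 - α j) * a j x) (Ici x) x :=
          ((ftc_right_aux (hac j) hsub hx).const_mul (1 - α j)).add_const ε
        have hpos : Aj j x + ε ≠ 0 := by
          have := hAjnn j x hxIcc; positivity
        exact hin.rpow_const (Or.inl hpos)
      have hsum : HasDerivWithinAt (fun t => ∑ j, (Aj j t + ε) ^ (q j))
          (∑ j, ((1 - α j) * a j x) * q j * (Aj j x + ε) ^ (q j - 1)) (Ici x) x :=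
        HasDerivWithinAt.fun_sum fun j _ => h2 j
      have := (h0.fun_add h1).fun_add hsum
      simpa using this
    -- derivative of Z
    set ZD : ℝ → ℝ := fun x =>
      Real.exp (A0 x) * a₀ x * Bf x ^ p +
        Real.exp (A0 x) *
          ((ε + ∑ j, ((1 - α j) * a j x) * q j * (Aj j x + ε) ^ (q j - 1)) * p *
            Bf x ^ (p - 1)) with hZDdef
    have hZd : ∀ x ∈ Ico t₀ T,
        HasDerivWithinAt (fun t => Real.exp (A0 t) * Bf t ^ p) (ZD x) (Ici x) x := by
      intro x hx
      have hxIcc : x ∈ Icc t₀ T := Ico_subset_Icc_self hx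
      have hexp : HasDerivWithinAt (fun t => Real.exp (A0 t))
          (Real.exp (A0 x) * a₀ x) (Ici x) x :=
        (ftc_right_aux ha₀c hsub hx).exp
      have hpow : HasDerivWithinAt (fun t => Bf t ^ p)
          ((ε + ∑ j, ((1 - α j) * a j x) * q j * (Aj j x + ε) ^ (q j - 1)) * p *
            Bf x ^ (p - 1)) (Ici x) x :=
        (hBd x hx).rpow_const (Or.inl (hBpos x hxIcc).ne')
      simpa [hZDdef] using hexp.fun_mul hpow
    -- y data
    have hyc : ContinuousOn y (Icc t₀ T) := fun x hx =>
      ((hy x (hsub hx)).continuousAt).continuousWithinAt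
    have hyd : ∀ x ∈ Ico t₀ T, HasDerivWithinAt y (y' x) (Ici x) x := fun x hx =>
      (hy x (hsub (Ico_subset_Icc_self hx))).hasDerivWithinAt
    -- initial bound
    have hinit : y t₀ ≤ Real.exp (A0 t₀) * Bf t₀ ^ p := by
      have hA00 : A0 t₀ = 0 := by simp [hA0def]
      have hBft₀ : (y₀ + ε) ^ e1 ≤ Bf t₀ := by
        have h3 : 0 ≤ ∑ j, (Aj j t₀ + ε) ^ (q j) :=
          Finset.sum_nonneg fun j _ => Real.rpow_nonneg (by
            have := hAjnn j t₀ ⟨le_rfl, hle⟩; linarith) _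
        simp only [hBfdef]
        have : ε * (t₀ - t₀) = 0 := by ring
        linarith [this.ge]
      have h4 : ((y₀ + ε) ^ e1) ^ p ≤ Bf t₀ ^ p :=
        Real.rpow_le_rpow (Real.rpow_nonneg hy₀ε.le _) hBft₀ hp.le
      have h5 : ((y₀ + ε) ^ e1) ^ p = y₀ + ε := by
        rw [← Real.rpow_mul hy₀ε.le]
        have : e1 * p = 1 := by rw [hpdef, mul_one_div, div_self he1.ne']
        rw [this, Real.rpow_one]
      rw [hA00, Real.exp_zero, one_mul]
      calc y t₀ = y₀ := hy₀
        _ ≤ y₀ + ε := by linarith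
        _ = ((y₀ + ε) ^ e1) ^ p := h5.symm
        _ ≤ Bf t₀ ^ p := h4
    -- the touching bound
    have htouch : ∀ x ∈ Ico t₀ T, y x = Real.exp (A0 x) * Bf x ^ p → y' x < ZD x := by
      intro x hx heq
      have hxIcc : x ∈ Icc t₀ T := Ico_subset_Icc_self hx
      have hxI : x ∈ I := hsub hxIcc
      have hA0x : 0 ≤ A0 x := hA0nn x hxIcc
      have hBx : 0 < Bf x := hBpos x hxIcc
      -- termwise estimate
      have hterm : ∀ j : Fin n, a j x * (Real.exp (A0 x) * Bf x ^ p) ^ α j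
          ≤ Real.exp (A0 x) * Bf x ^ (p - 1) * (Aj j x + ε) ^ (q j - 1) * a j x := by
        intro j
        have hajnn : 0 ≤ a j x := hann j x hxI
        have hvpos : 0 < Aj j x + ε := by linarith [hAjnn j x hxIcc]
        have e2 : (Real.exp (A0 x) * Bf x ^ p) ^ α j
            = Real.exp (A0 x) ^ α j * Bf x ^ (p * α j) := by
          rw [Real.mul_rpow (Real.exp_pos _).le (Real.rpow_nonneg hBx.le _),
            ← Real.rpow_mul hBx.le]
        have hexple : Real.exp (A0 x) ^ α j ≤ Real.exp (A0 x) := by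
          rw [← Real.exp_mul]
          apply Real.exp_le_exp.mpr
          have hαj1 : α j ≤ 1 := (hαle j).trans hα1.le
          nlinarith
        -- the key exponent inequality
        have hkey : (1:ℝ) ≤ Bf x ^ ((α i0 - α j) / e1) * (Aj j x + ε) ^ (q j - 1) := by
          have hβ : 0 ≤ α i0 - α j := sub_nonneg.mpr (hαle j)
          have hqj1 : q j - 1 = -((α i0 - α j) / (1 - α j)) := by
            rw [hqdef]
            simp only [he1def]
            field_simp [(h1α j).ne']
            ring
          have huv : (Aj j x + ε) ^ (q j) ≤ Bf x := by
            have h1 : (Aj j x + ε) ^ (q j) ≤ ∑ j', (Aj j' x + ε) ^ (q j') :=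
              Finset.single_le_sum (f := fun j' => (Aj j' x + ε) ^ (q j'))
                (fun i _ => Real.rpow_nonneg (by linarith [hAjnn i x hxIcc]) _)
                (Finset.mem_univ j)
            have h2 : 0 ≤ (y₀ + ε) ^ e1 := Real.rpow_nonneg hy₀ε.le _
            have h3 : 0 ≤ ε * (x - t₀) := mul_nonneg hε.le (by linarith [hx.1])
            simp only [hBfdef]
            linarith
          have hu : (Aj j x + ε) ^ ((1:ℝ) / (1 - α j)) ≤ Bf x ^ (1 / e1) := by
            calc (Aj j x + ε) ^ ((1:ℝ) / (1 - α j))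
                = ((Aj j x + ε) ^ (q j)) ^ (1 / e1) := by
                  rw [← Real.rpow_mul hvpos.le]
                  congr 1
                  rw [hqdef]
                  field_simp [(h1α j).ne', he1.ne']
              _ ≤ Bf x ^ (1 / e1) :=
                  Real.rpow_le_rpow (Real.rpow_nonneg hvpos.le _) huv (by positivity)
          have hupos : 0 < (Aj j x + ε) ^ ((1:ℝ) / (1 - α j)) :=
            Real.rpow_pos_of_pos hvpos _
          have h5 : ((Aj j x + ε) ^ ((1:ℝ) / (1 - α j))) ^ (α i0 - α j)
              ≤ (Bf x ^ ((1:ℝ) / e1)) ^ (α i0 - α j) :=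
            Real.rpow_le_rpow hupos.le hu hβ
          have e3 : Bf x ^ ((α i0 - α j) / e1) = (Bf x ^ ((1:ℝ) / e1)) ^ (α i0 - α j) := by
            rw [← Real.rpow_mul hBx.le]
            congr 1
            ring
          have e4 : (Aj j x + ε) ^ (q j - 1)
              = (((Aj j x + ε) ^ ((1:ℝ) / (1 - α j))) ^ (α i0 - α j))⁻¹ := by
            rw [← Real.rpow_mul hvpos.le, ← Real.rpow_neg hvpos.le]
            congr 1
            rw [hqj1]
            ring
          have hBβ : 0 < ((Aj j x + ε) ^ ((1:ℝ) / (1 - α j))) ^ (α i0 - α j) :=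
            Real.rpow_pos_of_pos hupos _
          rw [e3, e4, ← div_eq_mul_inv, le_div_iff₀ hBβ, one_mul]
          exact h5
        have hsplit : Bf x ^ (p - 1) = Bf x ^ (p * α j) * Bf x ^ ((α i0 - α j) / e1) := by
          rw [← Real.rpow_add hBx]
          congr 1
          rw [hpdef, he1def]
          field_simp
          rw [div_sub_one (ne_of_gt (by linarith : (0:ℝ) < 1 - α i0))]
          ring
        have hBle : Bf x ^ (p * α j) ≤ Bf x ^ (p - 1) * (Aj j x + ε) ^ (q j - 1) := by
          calc Bf x ^ (p * α j) = Bf x ^ (p * α j) * 1 := (mul_one _).symm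
            _ ≤ Bf x ^ (p * α j) *
                (Bf x ^ ((α i0 - α j) / e1) * (Aj j x + ε) ^ (q j - 1)) :=
                mul_le_mul_of_nonneg_left hkey (Real.rpow_nonneg hBx.le _)
            _ = Bf x ^ (p - 1) * (Aj j x + ε) ^ (q j - 1) := by rw [hsplit]; ring
        calc a j x * (Real.exp (A0 x) * Bf x ^ p) ^ α j
            = a j x * (Real.exp (A0 x) ^ α j * Bf x ^ (p * α j)) := by rw [e2]
          _ ≤ a j x * (Real.exp (A0 x) * (Bf x ^ (p - 1) * (Aj j x + ε) ^ (q j - 1))) := by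
              apply mul_le_mul_of_nonneg_left _ hajnn
              exact mul_le_mul hexple hBle (Real.rpow_nonneg hBx.le _) (Real.exp_pos _).le
          _ = Real.exp (A0 x) * Bf x ^ (p - 1) * (Aj j x + ε) ^ (q j - 1) * a j x := by ring
      have hsumle : ∑ j, a j x * (Real.exp (A0 x) * Bf x ^ p) ^ α j
          ≤ ∑ j, Real.exp (A0 x) * Bf x ^ (p - 1) * (Aj j x + ε) ^ (q j - 1) * a j x :=
        Finset.sum_le_sum fun j _ => hterm j
      -- expand ZD
      have hexpand : Real.exp (A0 x) *
            ((ε + ∑ j, ((1 - α j) * a j x) * q j * (Aj j x + ε) ^ (q j - 1)) * p *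
              Bf x ^ (p - 1))
          = Real.exp (A0 x) * p * Bf x ^ (p - 1) * ε +
            ∑ j, Real.exp (A0 x) * Bf x ^ (p - 1) * (Aj j x + ε) ^ (q j - 1) * a j x := by
        have step1 : Real.exp (A0 x) *
              ((ε + ∑ j, ((1 - α j) * a j x) * q j * (Aj j x + ε) ^ (q j - 1)) * p *
                Bf x ^ (p - 1))
            = Real.exp (A0 x) * p * Bf x ^ (p - 1) * ε +
              Real.exp (A0 x) * p * Bf x ^ (p - 1) *
                ∑ j, ((1 - α j) * a j x) * q j * (Aj j x + ε) ^ (q j - 1) := by ring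
        rw [step1, Finset.mul_sum]
        congr 1
        apply Finset.sum_congr rfl
        intro j _
        have hcoef : (1 - α j) * q j * p = 1 := by
          rw [hqdef, hpdef]
          field_simp [(h1α j).ne', he1.ne']
        calc Real.exp (A0 x) * p * Bf x ^ (p - 1) *
              ((1 - α j) * a j x * q j * (Aj j x + ε) ^ (q j - 1))
            = ((1 - α j) * q j * p) *
              (Real.exp (A0 x) * Bf x ^ (p - 1) * (Aj j x + ε) ^ (q j - 1) * a j x) := by
              ring
          _ = Real.exp (A0 x) * Bf x ^ (p - 1) * (Aj j x + ε) ^ (q j - 1) * a j x := by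
              rw [hcoef]; ring
      have hmargin : 0 < Real.exp (A0 x) * p * Bf x ^ (p - 1) * ε := by positivity
      have hb := hbound x hxI
      have hZDval : ZD x = Real.exp (A0 x) * a₀ x * Bf x ^ p +
          (Real.exp (A0 x) * p * Bf x ^ (p - 1) * ε +
            ∑ j, Real.exp (A0 x) * Bf x ^ (p - 1) * (Aj j x + ε) ^ (q j - 1) * a j x) := by
        rw [hZDdef]
        simp only []
        rw [hexpand]
      calc y' x ≤ |y' x| := le_abs_self _
        _ ≤ a₀ x * y x + ∑ j, a j x * y x ^ α j := hb
        _ = a₀ x * (Real.exp (A0 x) * Bf x ^ p) +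
            ∑ j, a j x * (Real.exp (A0 x) * Bf x ^ p) ^ α j := by rw [heq]
        _ ≤ a₀ x * (Real.exp (A0 x) * Bf x ^ p) +
            ∑ j, Real.exp (A0 x) * Bf x ^ (p - 1) * (Aj j x + ε) ^ (q j - 1) * a j x := by
            linarith
        _ < ZD x := by
            rw [hZDval]
            have hre : a₀ x * (Real.exp (A0 x) * Bf x ^ p)
                = Real.exp (A0 x) * a₀ x * Bf x ^ p := by ring
            rw [hre]
            linarith [hmargin]
    -- apply the fencing theorem
    have hfence := image_le_of_deriv_right_lt_deriv_boundary' hyc hyd hinit hZc hZd htouch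
      (right_mem_Icc.mpr hle)
    exact hfence
  -- Step 2: pass to the limit ε → 0⁺
  have hcont0 : ContinuousAt (fun ε : ℝ => Real.exp (A0 T) *
      ((y₀ + ε) ^ e1 + ε * (T - t₀) + ∑ j, (Aj j T + ε) ^ (q j)) ^ p) 0 := by
    apply ContinuousAt.mul continuousAt_const
    apply ContinuousAt.rpow_const _ (Or.inr hp.le)
    apply ContinuousAt.add
    apply ContinuousAt.add
    · exact (Real.continuousAt_rpow_const _ _ (Or.inr he1.le)).comp
        (continuous_const.add continuous_id).continuousAt
    · exact (continuous_id.mul continuous_const).continuousAt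
    · show Tendsto (fun ε : ℝ => ∑ j, (Aj j T + ε) ^ (q j)) (𝓝 0)
          (𝓝 (∑ j, (Aj j T + (0:ℝ)) ^ (q j)))
      exact tendsto_finset_sum _ fun j _ =>
        ((Real.continuousAt_rpow_const _ _ (Or.inr (hq j).le)).comp
          (continuous_const.add continuous_id).continuousAt).tendsto
  have htend : Tendsto (fun ε : ℝ => Real.exp (A0 T) *
      ((y₀ + ε) ^ e1 + ε * (T - t₀) + ∑ j, (Aj j T + ε) ^ (q j)) ^ p) (𝓝[>] (0:ℝ))
      (𝓝 (Real.exp (A0 T) * (y₀ ^ e1 + ∑ j, (Aj j T) ^ (q j)) ^ p)) := by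
    have := hcont0.tendsto.mono_left (nhdsWithin_le_nhds : 𝓝[>] (0:ℝ) ≤ 𝓝 0)
    simpa using this
  have hev : ∀ᶠ ε in 𝓝[>] (0:ℝ), y T ≤ Real.exp (A0 T) *
      ((y₀ + ε) ^ e1 + ε * (T - t₀) + ∑ j, (Aj j T + ε) ^ (q j)) ^ p :=
    eventually_nhdsWithin_of_forall fun ε hε => hmain ε hε
  exact ge_of_tendsto htend hev
/-- Lemma 2.3: a nonlinear Gronwall-type inequality. Indices `1..n` of the paper
are modelled by `Fin n`, with the distinguished index `1` modelled by `⟨0, hn⟩`. -/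
theorem stmt_1 (n : ℕ) (hn : 0 < n) (α : Fin n → ℝ)
    (hα0 : ∀ j, 0 ≤ α j) (hα1 : α ⟨0, hn⟩ < 1)
    (hαlt : ∀ j, j ≠ ⟨0, hn⟩ → α j < α ⟨0, hn⟩)
    (I : Set ℝ) (hI : I.OrdConnected)
    (a₀ : ℝ → ℝ) (a : Fin n → ℝ → ℝ)
    (ha₀c : ContinuousOn a₀ I) (ha₀nn : ∀ t ∈ I, 0 ≤ a₀ t)
    (hac : ∀ j, ContinuousOn (a j) I) (hann : ∀ j, ∀ t ∈ I, 0 ≤ a j t)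
    (y y' : ℝ → ℝ)
    (hy : ∀ t ∈ I, HasDerivAt y (y' t) t)
    (hynn : ∀ t ∈ I, 0 ≤ y t)
    (hbound : ∀ t ∈ I, |y' t| ≤ a₀ t * y t + ∑ j, a j t * y t ^ α j)
    (t₀ : ℝ) (ht₀ : t₀ ∈ I) (y₀ : ℝ) (hy₀ : y t₀ = y₀) :
    ∀ t ∈ I,
      y t ≤ Real.exp (|∫ s in t₀..t, a₀ s|) *
        (y₀ ^ (1 - α ⟨0, hn⟩) +
          ∑ j, ((1 - α j) * |∫ s in t₀..t, a j s|) ^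
            ((1 - α ⟨0, hn⟩) / (1 - α j))) ^ (1 / (1 - α ⟨0, hn⟩)) := by
  intro t ht
  have hαle : ∀ j, α j ≤ α ⟨0, hn⟩ := fun j => by
    rcases eq_or_ne j ⟨0, hn⟩ with h | h
    · rw [h]
    · exact (hαlt j h).le
  rcases le_total t₀ t with hle | hle
  · -- forward direction
    have hsub : Icc t₀ t ⊆ I := hI.out ht₀ ht
    have habs0 : |∫ s in t₀..t, a₀ s| = ∫ s in t₀..t, a₀ s :=
      abs_of_nonneg (intervalIntegral.integral_nonneg hle fun u hu => ha₀nn u (hsub hu))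
    have habsj : ∀ j : Fin n, |∫ s in t₀..t, a j s| = ∫ s in t₀..t, a j s := fun j =>
      abs_of_nonneg (intervalIntegral.integral_nonneg hle fun u hu => hann j u (hsub hu))
    simp only [habs0, habsj]
    exact gronwall_key n hn α hα0 hα1 hαle I hI a₀ a ha₀c ha₀nn hac hann y y' hy hynn
      hbound t₀ ht₀ y₀ hy₀ t ht hle
  · -- backward direction via reflection s ↦ 2 t₀ - s
    have hsub : Icc t t₀ ⊆ I := hI.out ht ht₀
    have hJoc : Set.OrdConnected ((fun s : ℝ => 2 * t₀ - s) ⁻¹' I) := by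
      constructor
      intro u hu v hv z hz
      have : 2 * t₀ - z ∈ Icc (2 * t₀ - v) (2 * t₀ - u) :=
        ⟨by linarith [hz.2], by linarith [hz.1]⟩
      exact hI.out hv hu this
    have hrc : Continuous (fun s : ℝ => 2 * t₀ - s) := by continuity
    have hmaps : MapsTo (fun s : ℝ => 2 * t₀ - s)
        ((fun s : ℝ => 2 * t₀ - s) ⁻¹' I) I := fun s hs => hs
    have ht₀J : t₀ ∈ (fun s : ℝ => 2 * t₀ - s) ⁻¹' I := by
      show 2 * t₀ - t₀ ∈ I
      rw [show 2 * t₀ - t₀ = t₀ by ring]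
      exact ht₀
    have htJ : 2 * t₀ - t ∈ (fun s : ℝ => 2 * t₀ - s) ⁻¹' I := by
      show 2 * t₀ - (2 * t₀ - t) ∈ I
      rw [show 2 * t₀ - (2 * t₀ - t) = t by ring]
      exact ht
    have hkey := gronwall_key n hn α hα0 hα1 hαle
      ((fun s : ℝ => 2 * t₀ - s) ⁻¹' I) hJoc
      (fun s => a₀ (2 * t₀ - s)) (fun j s => a j (2 * t₀ - s))
      (ha₀c.comp hrc.continuousOn hmaps) (fun s hs => ha₀nn _ hs)
      (fun j => (hac j).comp hrc.continuousOn hmaps) (fun j s hs => hann j _ hs)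
      (fun s => y (2 * t₀ - s)) (fun s => y' (2 * t₀ - s) * (-1))
      (by
        intro s hs
        have hinner : HasDerivAt (fun s : ℝ => 2 * t₀ - s) (-1) s := by
          simpa using (hasDerivAt_id s).const_sub (2 * t₀)
        exact (HasDerivAt.comp s (hy (2 * t₀ - s) hs) hinner :))
      (fun s hs => hynn _ hs)
      (by
        intro s hs
        have := hbound (2 * t₀ - s) hs
        simpa [abs_mul] using this)
      t₀ ht₀J y₀
      (by
        show y (2 * t₀ - t₀) = y₀
        rw [show 2 * t₀ - t₀ = t₀ by ring]
        exact hy₀)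
      (2 * t₀ - t) htJ (by linarith)
    have hrefl : ∀ f : ℝ → ℝ, (∀ u ∈ Icc t t₀, 0 ≤ f u) →
        |∫ s in t₀..t, f s| = ∫ s in t₀..(2 * t₀ - t), f (2 * t₀ - s) := by
      intro f hf
      have h1 : (∫ s in t₀..(2 * t₀ - t), f (2 * t₀ - s)) = ∫ x in t..t₀, f x := by
        rw [intervalIntegral.integral_comp_sub_left f (2 * t₀),
          show 2 * t₀ - (2 * t₀ - t) = t by ring, show 2 * t₀ - t₀ = t₀ by ring]
      have h2 : (∫ s in t₀..t, f s) = -∫ x in t..t₀, f x :=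
        intervalIntegral.integral_symm _ _
      have h3 : 0 ≤ ∫ x in t..t₀, f x := intervalIntegral.integral_nonneg hle hf
      rw [h1, h2, abs_neg, abs_of_nonneg h3]
    have habs0 := hrefl a₀ fun u hu => ha₀nn u (hsub hu)
    have habsj : ∀ j : Fin n, |∫ s in t₀..t, a j s|
        = ∫ s in t₀..(2 * t₀ - t), a j (2 * t₀ - s) := fun j =>
      hrefl (a j) fun u hu => hann j u (hsub hu)
    rw [show y t = y (2 * t₀ - (2 * t₀ - t)) by rw [show 2 * t₀ - (2 * t₀ - t) = t by ring]]
    simp only [habs0, habsj]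
    exact hkey
end
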